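/- Let L be any finitary first-order language and φ an L-sentence. Then ¬θ(φ) is expressible by an L-theory iff it is expressible by a single L-sentence. That is: if there is an L-theory T such that for every nonempty L-structure A, A ⊨ T iff no nonempty substructure of A satisfies φ, then there is a single L-sentence ψ such that for every nonempty L-structure A, A ⊨ ψ iff no nonempty substructure of A satisfies φ (the converse being trivial). -/

import Mathlib

/- STATEMENT 5: For any finitary first-order language L and L-sentence φ,
¬θ(φ) is expressible by an L-theory iff it is expressible by a single L-sentence. -/

open FirstOrder Language

universe u v

section UltraEmb

open Filter FirstOrder Language Structure

variable {α : Type*} {L : FirstOrder.Language} {N M : α → Type*}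
  [∀ a, L.Structure (N a)] [∀ a, L.Structure (M a)]

/-- Componentwise embeddings induce an embedding of ultraproducts. -/
noncomputable def ultraproductEmbedding (𝓤 : Ultrafilter α) (g : ∀ a, N a ↪[L] M a) :
    ((𝓤 : Filter α).Product N) ↪[L] ((𝓤 : Filter α).Product M) := by
  letI sn := (𝓤 : Filter α).productSetoid N
  letI sm := (𝓤 : Filter α).productSetoid M
  have hwd : ∀ x y : (∀ a, N a), sn.r x y → sm.r (fun a => g a (x a)) (fun a => g a (y a)) :=
    fun x y h => Filter.Eventually.mono h fun a ha => congrArg (g a) ha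
  let F : ((𝓤 : Filter α).Product N) → ((𝓤 : Filter α).Product M) :=
    Quotient.map (fun x a => g a (x a)) hwd
  have hF : ∀ z : (∀ a, N a), F (z : (𝓤 : Filter α).Product N) =
      ((fun a => g a (z a) : ∀ a, M a) : (𝓤 : Filter α).Product M) := fun z => rfl
  have hrep : ∀ {k : ℕ} (x : Fin k → (𝓤 : Filter α).Product N),
      ∃ x' : Fin k → ∀ a, N a, x = fun i => ((x' i) : (𝓤 : Filter α).Product N) := by
    intro k x
    have : ∀ i, ∃ y : ∀ a, N a, (y : (𝓤 : Filter α).Product N) = x i :=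
      fun i => Quotient.exists_rep (x i)
    choose x' hx' using this
    exact ⟨x', funext fun i => (hx' i).symm⟩
  have hrelN : ∀ {k : ℕ} (r : L.Relations k) (z : Fin k → ∀ a, N a),
      RelMap r (fun i => ((z i) : (𝓤 : Filter α).Product N)) ↔
        ∀ᶠ a in (𝓤 : Filter α), RelMap r fun i => z i a :=
    fun r z => relMap_quotient_mk' sn r z
  have hrelM : ∀ {k : ℕ} (r : L.Relations k) (z : Fin k → ∀ a, M a),
      RelMap r (fun i => ((z i) : (𝓤 : Filter α).Product M)) ↔
        ∀ᶠ a in (𝓤 : Filter α), RelMap r fun i => z i a :=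
    fun r z => relMap_quotient_mk' sm r z
  refine ⟨⟨F, ?_⟩, ?_, ?_⟩
  · rintro ⟨x⟩ ⟨y⟩ h
    exact Quotient.sound (Filter.Eventually.mono (Quotient.exact h)
      fun a ha => (g a).injective ha)
  · intro n f x
    obtain ⟨x', rfl⟩ := hrep x
    calc F (funMap f fun i => ((x' i) : (𝓤 : Filter α).Product N))
        = F ((fun a => funMap f fun i => x' i a : ∀ a, N a) : (𝓤 : Filter α).Product N) := by
          exact congrArg F (Ultraproduct.funMap_cast f x')
      _ = @id ((𝓤 : Filter α).Product M) ((fun a => g a (funMap f fun i => x' i a) : ∀ a, M a) : (𝓤 : Filter α).Product M) :=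
          hF _
      _ = @id ((𝓤 : Filter α).Product M) ((fun a => funMap f fun i => g a (x' i a) : ∀ a, M a) : (𝓤 : Filter α).Product M) := by
          exact congrArg (fun z : ∀ a, M a => (z : (𝓤 : Filter α).Product M))
            (funext fun a => (g a).map_fun f _)
      _ = @id ((𝓤 : Filter α).Product M) (funMap f fun i => ((fun a => g a (x' i a) : ∀ a, M a) : (𝓤 : Filter α).Product M)) :=
          (Ultraproduct.funMap_cast f _).symm
      _ = funMap f (F ∘ fun i => ((x' i) : (𝓤 : Filter α).Product N)) := by
          refine congrArg (funMap f) (funext fun i => ?_)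
          exact (hF (x' i)).symm
  · intro n r x
    obtain ⟨x', rfl⟩ := hrep x
    have h1 : (F ∘ fun i => ((x' i) : (𝓤 : Filter α).Product N)) =
        fun i => ((fun a => g a (x' i a) : ∀ a, M a) : (𝓤 : Filter α).Product M) :=
      funext fun i => hF (x' i)
    rw [h1]
    refine (hrelM r _).trans (Iff.trans ?_ (hrelN r x').symm)
    exact Filter.eventually_congr (Filter.Eventually.of_forall fun a => (g a).map_rel r _)

end UltraEmb

theorem neg_theta_theory_iff_sentence
    {L : FirstOrder.Language.{u, v}} (φ : L.Sentence) :
    (∃ T : L.Theory,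
        ∀ (M : Type (max u v)) [L.Structure M] [Nonempty M],
          M ⊨ T ↔ ¬ ∃ S : L.Substructure M, Nonempty S ∧ S ⊨ φ) ↔
      (∃ ψ : L.Sentence,
        ∀ (M : Type (max u v)) [L.Structure M] [Nonempty M],
          M ⊨ ψ ↔ ¬ ∃ S : L.Substructure M, Nonempty S ∧ S ⊨ φ) := by
  constructor
  · rintro ⟨T, hT⟩
    -- For a finite set s of sentences of T, the conjunction sentence:
    classical
    let conj : Finset ↥T → L.Sentence := fun s => BoundedFormula.iInf (fun σ : s => σ.1.1)
    have hconj : ∀ (M : Type (max u v)) [L.Structure M] (s : Finset ↥T),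
        M ⊨ conj s ↔ ∀ σ ∈ s, M ⊨ (σ : ↥T).1 := by
      intro M _ s
      simp only [conj, Sentence.Realize, Formula.Realize, BoundedFormula.realize_iInf, Subtype.forall]
    by_cases hfin : ∃ s : Finset ↥T,
        ∀ (M : Type (max u v)) [L.Structure M] [Nonempty M],
          M ⊨ conj s → ¬ ∃ S : L.Substructure M, Nonempty S ∧ S ⊨ φ
    · obtain ⟨s, hs⟩ := hfin
      refine ⟨conj s, fun M _ _ => ⟨hs M, fun h => ?_⟩⟩
      rw [hconj M s]
      intro σ hσ
      exact ((hT M).2 h).realize_of_mem _ σ.2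
    · exfalso
      push_neg at hfin
      -- For each finite s, choose a counterexample structure
      have hP : ∀ s : Finset ↥T, ∃ (M : Type (max u v)) (_ : L.Structure M) (_ : Nonempty M),
          M ⊨ conj s ∧ ∃ S : L.Substructure M, Nonempty S ∧ S ⊨ φ := by
        intro s
        obtain ⟨M, str, ne, hMs, hMθ⟩ := hfin s
        exact ⟨M, str, ne, hMs, hMθ⟩
      choose M str ne hMconj S hSne hSφ using hP
      letI : ∀ s, L.Structure (M s) := str
      haveI : ∀ s, Nonempty (M s) := ne
      haveI : ∀ s, Nonempty ((S s : L.Substructure (M s)) : Type _) := hSne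
      -- Ultrafilter on Finset ↥T extending atTop
      haveI : Nonempty (Finset ↥T) := ⟨∅⟩
      let 𝓤 : Ultrafilter (Finset ↥T) := Ultrafilter.of Filter.atTop
      have h𝓤 : ∀ s₀ : Finset ↥T, {s | s₀ ≤ s} ∈ 𝓤 :=
        fun s₀ => Ultrafilter.of_le Filter.atTop (Filter.mem_atTop s₀)
      -- The ultraproduct of the M s models T
      let MP := (𝓤 : Filter (Finset ↥T)).Product M
      have hMPT : MP ⊨ T := by
        rw [Theory.model_iff]
        intro σ hσ
        rw [Ultraproduct.sentence_realize]
        refine Filter.mem_of_superset (h𝓤 {⟨σ, hσ⟩}) fun s hs => ?_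
        exact (hconj (M s) s).1 (hMconj s) ⟨σ, hσ⟩ (Finset.singleton_subset_iff.1 hs)
      -- But the ultraproduct of the substructures S s gives a substructure of MP modeling φ
      have hnθ := (hT MP).1 hMPT
      apply hnθ
      let e : ((𝓤 : Filter (Finset ↥T)).Product fun s => ↥(S s)) ↪[L] MP :=
        ultraproductEmbedding 𝓤 (fun s => (S s).subtype)
      have hNφ : ((𝓤 : Filter (Finset ↥T)).Product fun s => ↥(S s)) ⊨ φ := by
        rw [Ultraproduct.sentence_realize]
        exact Filter.Eventually.of_forall fun s => hSφ s
      refine ⟨e.toHom.range, ?_, ?_⟩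
      · exact ⟨e (Classical.arbitrary _), _, rfl⟩
      · exact (StrongHomClass.realize_sentence e.equivRange φ).1 hNφ
  · rintro ⟨ψ, hψ⟩
    refine ⟨{ψ}, fun M _ _ => ?_⟩
    rw [Theory.model_iff]
    simp only [Set.mem_singleton_iff, forall_eq]
    exact hψ M
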